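/- arXiv:2110.03045 — 6 statements merged into one kernel-verified Lean document; each statement's English description precedes it below -/
import Mathlib

section
/- For the scalar 3DVAR iteration, for every n ≥ 1 the mean squared error satisfies E[(u_n − u†)²] ≥ γ²K². In particular, scalar 3DVAR without iterate averaging cannot converge in mean square for any fixed choice of the regularization parameter α. -/
open MeasureTheory ProbabilityTheory

open scoped NNReal ENNReal
open Real

lemma my_integral_sq_exp {b : ℝ} (hb : 0 < b) :
    ∫ x : ℝ, x ^ 2 * Real.exp (-b * x ^ 2) = (2 * b)⁻¹ * Real.sqrt (π / b) := by
  have hb' : b ≠ 0 := hb.ne'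
  have hv : ∀ x : ℝ, HasDerivAt (fun x : ℝ => -(2 * b)⁻¹ * Real.exp (-b * x ^ 2))
      (x * Real.exp (-b * x ^ 2)) x := by
    intro x
    have h1 : HasDerivAt (fun x : ℝ => -b * x ^ 2) (-b * (2 * x)) x := by
      simpa using ((hasDerivAt_pow 2 x).const_mul (-b))
    have h2 := (h1.exp).const_mul (-(2 * b)⁻¹)
    refine h2.congr_deriv ?_
    have h2b : (2 * b) ≠ 0 := by positivity
    linear_combination (x * Real.exp (-b * x ^ 2)) * inv_mul_cancel₀ h2b
  have hu : ∀ x : ℝ, HasDerivAt (fun x : ℝ => x) (1 : ℝ) x := fun x => hasDerivAt_id x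
  have hint_sq : Integrable (fun x : ℝ => x ^ 2 * Real.exp (-b * x ^ 2)) := by
    have := integrable_rpow_mul_exp_neg_mul_sq hb (s := ((2 : ℕ) : ℝ)) (by norm_num)
    refine this.congr (Filter.Eventually.of_forall fun x => ?_)
    simp [Real.rpow_natCast]
  have hint_exp : Integrable (fun x : ℝ => Real.exp (-b * x ^ 2)) :=
    integrable_exp_neg_mul_sq hb
  have hint_lin : Integrable (fun x : ℝ => x * Real.exp (-b * x ^ 2)) :=
    integrable_mul_exp_neg_mul_sq hb
  have key := integral_mul_deriv_eq_deriv_mul_of_integrable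
      (u := fun x : ℝ => x) (u' := fun _ => (1 : ℝ))
      (v := fun x : ℝ => -(2 * b)⁻¹ * Real.exp (-b * x ^ 2))
      (v' := fun x : ℝ => x * Real.exp (-b * x ^ 2))
      (fun x _ => hu x) (fun x _ => hv x) ?_ ?_ ?_
  · have h1 : (∫ x : ℝ, x * (x * Real.exp (-b * x ^ 2)))
        = ∫ x : ℝ, x ^ 2 * Real.exp (-b * x ^ 2) := by
      congr 1; funext x; ring
    have h2 : (∫ x : ℝ, (1 : ℝ) * (-(2 * b)⁻¹ * Real.exp (-b * x ^ 2)))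
        = -(2 * b)⁻¹ * Real.sqrt (π / b) := by
      simp_rw [one_mul]
      rw [integral_const_mul, integral_gaussian]
    rw [h1] at key
    rw [key, h2]
    ring
  · refine hint_sq.congr (Filter.Eventually.of_forall fun x => ?_)
    simp only [Pi.mul_apply]; ring
  · refine (hint_exp.const_mul (-(2 * b)⁻¹)).congr (Filter.Eventually.of_forall fun x => ?_)
    simp only [Pi.mul_apply]; ring
  · refine (hint_lin.const_mul (-(2 * b)⁻¹)).congr (Filter.Eventually.of_forall fun x => ?_)
    simp only [Pi.mul_apply]; ring

lemma my_gaussian_density (v : ℝ≥0) :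
    gaussianPDF 0 v = fun x => ((Real.toNNReal (gaussianPDFReal 0 v x) : ℝ≥0) : ℝ≥0∞) := rfl

lemma my_integral_gaussianReal (g : ℝ → ℝ) {v : ℝ≥0} (hv : v ≠ 0) :
    ∫ x, g x ∂(gaussianReal 0 v) = ∫ x, gaussianPDFReal 0 v x * g x := by
  rw [gaussianReal_of_var_ne_zero _ hv, my_gaussian_density,
    integral_withDensity_eq_integral_smul
      (f := fun x => (gaussianPDFReal 0 v x).toNNReal)
      (measurable_real_toNNReal.comp (measurable_gaussianPDFReal 0 v)) g]
  congr 1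
  funext x
  simp [NNReal.smul_def, Real.coe_toNNReal _ (gaussianPDFReal_nonneg 0 v x)]

lemma my_integrable_gaussianReal {g : ℝ → ℝ} {v : ℝ≥0} (hv : v ≠ 0)
    (h : Integrable (fun x => gaussianPDFReal 0 v x * g x) volume) :
    Integrable g (gaussianReal 0 v) := by
  rw [gaussianReal_of_var_ne_zero _ hv, my_gaussian_density,
    integrable_withDensity_iff_integrable_smul
      (f := fun x => (gaussianPDFReal 0 v x).toNNReal)
      (measurable_real_toNNReal.comp (measurable_gaussianPDFReal 0 v))]
  refine h.congr (Filter.Eventually.of_forall fun x => ?_)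
  simp [NNReal.smul_def, Real.coe_toNNReal _ (gaussianPDFReal_nonneg 0 v x)]

lemma my_pdf_eq {v : ℝ≥0} (hv : v ≠ 0) (x : ℝ) :
    gaussianPDFReal 0 v x
      = (Real.sqrt (2 * π * v))⁻¹ * Real.exp (-(2 * (v : ℝ))⁻¹ * x ^ 2) := by
  have hv' : (0 : ℝ) < v := by positivity
  rw [gaussianPDFReal]
  congr 1
  rw [sub_zero]
  congr 1
  field_simp

lemma my_gauss_sq {v : ℝ≥0} (hv : v ≠ 0) :
    ∫ x, x ^ 2 ∂(gaussianReal 0 v) = v := by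
  have hv' : (0 : ℝ) < v := lt_of_le_of_ne v.coe_nonneg (by exact_mod_cast hv.symm)
  have hb : (0 : ℝ) < (2 * (v : ℝ))⁻¹ := by positivity
  rw [my_integral_gaussianReal _ hv]
  have heq : (fun x : ℝ => gaussianPDFReal 0 v x * x ^ 2)
      = fun x => (Real.sqrt (2 * π * v))⁻¹ * (x ^ 2 * Real.exp (-(2 * (v : ℝ))⁻¹ * x ^ 2)) := by
    funext x
    rw [my_pdf_eq hv]
    ring
  rw [heq, integral_const_mul, my_integral_sq_exp hb]
  have h1 : ((2 : ℝ) * (2 * (v : ℝ))⁻¹)⁻¹ = (v : ℝ) := by field_simp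
  have h2 : π / (2 * (v : ℝ))⁻¹ = 2 * π * v := by field_simp
  rw [h1, h2]
  have h3 : (0 : ℝ) < Real.sqrt (2 * π * v) := Real.sqrt_pos.2 (by positivity)
  field_simp

lemma my_gauss_mean {v : ℝ≥0} (hv : v ≠ 0) :
    ∫ x, x ∂(gaussianReal 0 v) = 0 := by
  rw [my_integral_gaussianReal _ hv]
  have hodd : ∀ x : ℝ, gaussianPDFReal 0 v (-x) * (-x) = -(gaussianPDFReal 0 v x * x) := by
    intro x
    rw [my_pdf_eq hv, my_pdf_eq hv, neg_sq]
    ring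
  have h := integral_neg_eq_self (fun x : ℝ => gaussianPDFReal 0 v x * x) volume
  simp_rw [hodd, integral_neg] at h
  linarith

lemma my_gauss_sq_integrable {v : ℝ≥0} (hv : v ≠ 0) :
    Integrable (fun x : ℝ => x ^ 2) (gaussianReal 0 v) := by
  have hv' : (0 : ℝ) < v := lt_of_le_of_ne v.coe_nonneg (by exact_mod_cast hv.symm)
  have hb : (0 : ℝ) < (2 * (v : ℝ))⁻¹ := by positivity
  refine my_integrable_gaussianReal hv ?_
  have hint : Integrable (fun x : ℝ => x ^ 2 * Real.exp (-(2 * (v : ℝ))⁻¹ * x ^ 2)) := by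
    have := integrable_rpow_mul_exp_neg_mul_sq hb (s := ((2 : ℕ) : ℝ)) (by norm_num)
    refine this.congr (Filter.Eventually.of_forall fun x => ?_)
    simp [Real.rpow_natCast]
  refine (hint.const_mul ((Real.sqrt (2 * π * v))⁻¹)).congr
    (Filter.Eventually.of_forall fun x => ?_)
  simp only
  rw [my_pdf_eq hv]
  ring

lemma my_gauss_memL2 {v : ℝ≥0} (hv : v ≠ 0) :
    MemLp (fun x : ℝ => x) 2 (gaussianReal 0 v) :=
  (memLp_two_iff_integrable_sq measurable_id.aestronglyMeasurable).2 (my_gauss_sq_integrable hv)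

/-- Scalar 3DVAR without iterate averaging cannot converge in mean square:
for every `n ≥ 1`, `E[(u_n − u†)²] ≥ γ² K²`. -/
theorem scalar_3dvar_no_convergence
    {Ω : Type*} [MeasurableSpace Ω] (μ : Measure Ω) [IsProbabilityMeasure μ]
    (A Sg α γ udag u0 : ℝ) (hA : A ≠ 0) (hSg : 0 < Sg) (hα : 0 < α) (hγ : 0 < γ)
    (η : ℕ → Ω → ℝ) (hmeas : ∀ n, Measurable (η n))
    (hindep : iIndepFun η μ)
    (hgauss : ∀ n, 1 ≤ n → Measure.map (η n) μ = gaussianReal 0 (Real.toNNReal (γ ^ 2)))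
    (y : ℕ → Ω → ℝ) (hy : ∀ n, 1 ≤ n → y n = fun ω => A * udag + η n ω)
    (K : ℝ) (hK : K = A * Sg / (A ^ 2 * Sg + α))
    (u : ℕ → Ω → ℝ) (hu0 : u 0 = fun _ => u0)
    (hu : ∀ n : ℕ, u (n + 1) = fun ω => K * y (n + 1) ω + (1 - K * A) * u n ω) :
    ∀ n : ℕ, 1 ≤ n → γ ^ 2 * K ^ 2 ≤ ∫ ω, (u n ω - udag) ^ 2 ∂μ := by
  intro n hn
  obtain ⟨m, rfl⟩ : ∃ m, n = m + 1 := ⟨n - 1, by omega⟩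
  have hγ2 : (0 : ℝ) < γ ^ 2 := by positivity
  set v : ℝ≥0 := Real.toNNReal (γ ^ 2) with hvdef
  have hv0 : v ≠ 0 := by
    simp only [hvdef, ne_eq, Real.toNNReal_eq_zero, not_le]
    exact hγ2
  have hvcoe : (v : ℝ) = γ ^ 2 := Real.coe_toNNReal _ hγ2.le
  -- moments and integrability of the noise
  have hXmem : ∀ k, 1 ≤ k → MemLp (η k) 2 μ := by
    intro k hk
    have h' : MemLp (id ∘ η k) 2 μ := by
      rw [← memLp_map_measure_iff measurable_id.aestronglyMeasurable (hmeas k).aemeasurable,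
        hgauss k hk]
      exact my_gauss_memL2 hv0
    exact h'
  have hXsq : ∀ k, 1 ≤ k → ∫ ω, η k ω ^ 2 ∂μ = γ ^ 2 := by
    intro k hk
    have h1 : ∫ ω, η k ω ^ 2 ∂μ = ∫ x, x ^ 2 ∂(Measure.map (η k) μ) :=
      (integral_map (hmeas k).aemeasurable
        ((measurable_id.pow_const 2).aestronglyMeasurable)).symm
    rw [h1, hgauss k hk, my_gauss_sq hv0, hvcoe]
  have hXmean : ∀ k, 1 ≤ k → ∫ ω, η k ω ∂μ = 0 := by
    intro k hk
    have h1 : ∫ ω, η k ω ∂μ = ∫ x, x ∂(Measure.map (η k) μ) :=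
      (integral_map (hmeas k).aemeasurable measurable_id.aestronglyMeasurable).symm
    rw [h1, hgauss k hk, my_gauss_mean hv0]
  -- the iterates are in L²
  have humem : ∀ k, MemLp (u k) 2 μ := by
    intro k
    induction k with
    | zero => rw [hu0]; exact memLp_const u0
    | succ k ih =>
      simp only [hu k, hy (k + 1) (by omega)]
      have h1 : MemLp (fun ω => A * udag + η (k + 1) ω) 2 μ :=
        (memLp_const (A * udag)).add (hXmem (k + 1) (by omega))
      exact (h1.const_mul K).add (ih.const_mul (1 - K * A))
  -- u m factors through the noise variables with index ≤ m
  have key : ∀ k, k ≤ m → ∃ g : (↥(Finset.range (m + 1)) → ℝ) → ℝ,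
      Measurable g ∧ ∀ ω, u k ω = g (fun i => η (i : ℕ) ω) := by
    intro k
    induction k with
    | zero =>
      intro _
      exact ⟨fun _ => u0, measurable_const, fun ω => by rw [hu0]⟩
    | succ k ih =>
      intro hk
      obtain ⟨g, hgmeas, hg⟩ := ih (by omega)
      have hmem : (k + 1) ∈ Finset.range (m + 1) := Finset.mem_range.2 (by omega)
      refine ⟨fun w => K * (A * udag + w ⟨k + 1, hmem⟩) + (1 - K * A) * g w, ?_, ?_⟩
      · exact (((measurable_pi_apply _).const_add (A * udag)).const_mul K).add
          (hgmeas.const_mul _)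
      · intro ω
        simp only [hu k, hy (k + 1) (by omega)]
        rw [hg ω]
  -- independence of the last noise from the previous iterate
  have hindep1 : IndepFun (η (m + 1)) (u m) μ := by
    obtain ⟨g, hgmeas, hg⟩ := key m le_rfl
    have hdisj : Disjoint ({m + 1} : Finset ℕ) (Finset.range (m + 1)) := by
      simp [Finset.disjoint_left, Finset.mem_range]
    have h := hindep.indepFun_finset {m + 1} (Finset.range (m + 1)) hdisj hmeas
    have h2 := h.comp
      (φ := fun w : (↥({m + 1} : Finset ℕ) → ℝ) => w ⟨m + 1, Finset.mem_singleton_self _⟩)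
      (ψ := g) (measurable_pi_apply _ : Measurable fun w : (↥({m + 1} : Finset ℕ) → ℝ) => w ⟨m + 1, Finset.mem_singleton_self _⟩) hgmeas
    have hu_eq : u m = g ∘ (fun a (i : ↥(Finset.range (m + 1))) => η (i : ℕ) a) :=
      funext fun ω => hg ω
    rw [hu_eq]
    exact h2
  set Z : Ω → ℝ := fun ω => (1 - K * A) * (u m ω - udag) with hZdef
  have hindepXZ : IndepFun (η (m + 1)) Z μ :=
    hindep1.comp (φ := id) (ψ := fun z => (1 - K * A) * (z - udag)) measurable_id
      ((measurable_id.sub_const udag).const_mul (1 - K * A))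
  have hXm : MemLp (η (m + 1)) 2 μ := hXmem (m + 1) (by omega)
  have hZm : MemLp Z 2 μ := ((humem m).sub (memLp_const udag)).const_mul (1 - K * A)
  have hX2 : Integrable (fun ω => η (m + 1) ω ^ 2) μ :=
    (memLp_two_iff_integrable_sq hXm.aestronglyMeasurable).1 hXm
  have hZ2 : Integrable (fun ω => Z ω ^ 2) μ :=
    (memLp_two_iff_integrable_sq hZm.aestronglyMeasurable).1 hZm
  have hXZ : Integrable (fun ω => η (m + 1) ω * Z ω) μ :=
    hindepXZ.integrable_mul (hXm.integrable one_le_two) (hZm.integrable one_le_two)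
  have hrep : ∀ ω, u (m + 1) ω - udag = K * η (m + 1) ω + Z ω := by
    intro ω
    simp only [hu m, hy (m + 1) (by omega), hZdef]
    ring
  have hcross : ∫ ω, η (m + 1) ω * Z ω ∂μ = 0 := by
    have h : ∫ ω, η (m + 1) ω * Z ω ∂μ = (∫ ω, η (m + 1) ω ∂μ) * ∫ ω, Z ω ∂μ :=
      hindepXZ.integral_mul_eq_mul_integral hXm.aestronglyMeasurable hZm.aestronglyMeasurable
    rw [h, hXmean (m + 1) (by omega), zero_mul]
  have hsplit : ∫ ω, (u (m + 1) ω - udag) ^ 2 ∂μ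
      = K ^ 2 * (∫ ω, η (m + 1) ω ^ 2 ∂μ) + 2 * K * (∫ ω, η (m + 1) ω * Z ω ∂μ)
        + ∫ ω, Z ω ^ 2 ∂μ := by
    have heq : (fun ω => (u (m + 1) ω - udag) ^ 2)
        = fun ω => (K ^ 2 * η (m + 1) ω ^ 2 + 2 * K * (η (m + 1) ω * Z ω)) + Z ω ^ 2 := by
      funext ω; rw [hrep ω]; ring
    have hf1 : Integrable (fun ω => K ^ 2 * η (m + 1) ω ^ 2 + 2 * K * (η (m + 1) ω * Z ω)) μ :=
      (hX2.const_mul _).add (hXZ.const_mul _)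
    rw [heq, integral_add hf1 hZ2, integral_add (hX2.const_mul _) (hXZ.const_mul _),
      integral_const_mul, integral_const_mul]
  rw [hsplit, hcross, hXsq (m + 1) (by omega)]
  have h0 : 0 ≤ ∫ ω, Z ω ^ 2 ∂μ := integral_nonneg fun ω => sq_nonneg _
  nlinarith [h0]
end

section
/- Scalar bias bound for iterate-averaged 3DVAR: let A ≠ 0, Σ > 0, α > 0 be real, K = AΣ/(A²Σ + α), and v₀ ∈ ℝ. Then for every τ_b ∈ [0,1] and every n ≥ 1, the averaged bias term Ī_n^{bias} = (1/n) Σ_{k=1}^{n} (1 − K A)^k v₀ satisfies |Ī_n^{bias}|² ≤ (A²Σ)^{−2τ_b} (n/α)^{−2τ_b} v₀². -/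
open Finset

/-- `q_{n,α}(λ) = λ⁻¹ (1 − (α/(α+λ))^n)`. -/
noncomputable def qFun (n : ℕ) (α l : ℝ) : ℝ := l⁻¹ * (1 - (α / (α + l)) ^ n)

lemma geom_Icc_mul (r : ℝ) (n : ℕ) :
    (∑ k ∈ Icc 1 n, r ^ k) * (1 - r) = r - r ^ (n + 1) := by
  induction n with
  | zero => simp
  | succ n ih =>
    rw [Finset.sum_Icc_succ_top (by omega)]
    ring_nf
    ring_nf at ih
    linear_combination ih

/-- Scalar bias bound for iterate-averaged 3DVAR:
`|Ī_n^{bias}|² ≤ (A²Σ)^{−2τ_b} (n/α)^{−2τ_b} v₀²` for all `τ_b ∈ [0,1]`, `n ≥ 1`. -/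
theorem scalar_3dvar_averaged_bias_bound
    (A Sg α v0 : ℝ) (hA : A ≠ 0) (hSg : 0 < Sg) (hα : 0 < α)
    (K : ℝ) (hK : K = A * Sg / (A ^ 2 * Sg + α)) :
    ∀ τb : ℝ, τb ∈ Set.Icc (0:ℝ) 1 → ∀ n : ℕ, 1 ≤ n →
      ((1 / (n : ℝ)) * ∑ k ∈ Icc 1 n, (1 - K * A) ^ k * v0) ^ 2 ≤
        (A ^ 2 * Sg) ^ (-(2 * τb)) * ((n : ℝ) / α) ^ (-(2 * τb)) * v0 ^ 2 := by
  intro τb hτ n hn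
  obtain ⟨hτ0, hτ1⟩ := hτ
  have hB : 0 < A ^ 2 * Sg := by positivity
  have hden : 0 < A ^ 2 * Sg + α := by linarith
  set r : ℝ := 1 - K * A with hrdef
  have hr : r = α / (A ^ 2 * Sg + α) := by
    rw [hrdef, hK]; field_simp; ring
  have hrpos : 0 < r := by rw [hr]; positivity
  have hrlt : r < 1 := by
    rw [hr, div_lt_one hden]; linarith
  set S : ℝ := ∑ k ∈ Icc 1 n, r ^ k with hSdef
  have hS0 : 0 ≤ S := Finset.sum_nonneg fun k _ => pow_nonneg hrpos.le k
  have hSn : S ≤ (n : ℝ) := by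
    calc S ≤ ∑ k ∈ Icc 1 n, (1:ℝ) :=
          Finset.sum_le_sum fun k _ => pow_le_one₀ hrpos.le hrlt.le
      _ = (n : ℝ) := by simp
  have hgeom := geom_Icc_mul r n
  have hpow : 0 ≤ r ^ (n + 1) := pow_nonneg hrpos.le _
  have e1 : (1 - r) * (A ^ 2 * Sg + α) = A ^ 2 * Sg := by
    rw [hr]; field_simp; ring
  have e2 : r * (A ^ 2 * Sg + α) = α := by
    rw [hr]; field_simp
  have hSB : S * (A ^ 2 * Sg) ≤ α := by nlinarith [hgeom, e1, e2, hpow]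
  have hnpos : (0:ℝ) < (n : ℝ) := by exact_mod_cast hn
  set y : ℝ := (A ^ 2 * Sg) * ((n : ℝ) / α) with hydef
  have hy : 0 < y := by positivity
  have havg0 : 0 ≤ S / n := div_nonneg hS0 hnpos.le
  have havg1 : S / n ≤ 1 := by
    rw [div_le_one hnpos]; exact hSn
  have havg2 : S / n ≤ y⁻¹ := by
    have hyinv : y⁻¹ = α / ((A ^ 2 * Sg) * n) := by
      rw [hydef]; field_simp
    rw [hyinv, div_le_div_iff₀ hnpos (by positivity)]
    nlinarith [hSB]
  have hkey : S / n ≤ y ^ (-τb) := by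
    rcases le_total 1 y with hy1 | hy1
    · calc S / n ≤ y⁻¹ := havg2
        _ = y ^ (-(1:ℝ)) := by rw [Real.rpow_neg_one]
        _ ≤ y ^ (-τb) := Real.rpow_le_rpow_of_exponent_le hy1 (by linarith)
    · calc S / n ≤ 1 := havg1
        _ ≤ y ^ (-τb) := Real.one_le_rpow_of_pos_of_le_one_of_nonpos hy hy1 (by linarith)
  have hfact : ∑ k ∈ Icc 1 n, (1 - K * A) ^ k * v0 = S * v0 := by
    rw [hSdef, Finset.sum_mul]
  rw [hfact]
  have hLHS : ((1 / (n : ℝ)) * (S * v0)) ^ 2 = (S / n) ^ 2 * v0 ^ 2 := by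
    field_simp
  have hsq : (y ^ (-τb)) ^ 2 = y ^ (-(2 * τb)) := by
    rw [← Real.rpow_natCast (y ^ (-τb)) 2, ← Real.rpow_mul hy.le]
    norm_num
    congr 1
    ring
  have hmul : (A ^ 2 * Sg) ^ (-(2 * τb)) * ((n : ℝ) / α) ^ (-(2 * τb)) = y ^ (-(2 * τb)) := by
    rw [hydef, ← Real.mul_rpow hB.le (by positivity)]
  rw [hLHS, hmul, ← hsq]
  exact mul_le_mul_of_nonneg_right (pow_le_pow_left₀ havg0 hkey 2) (sq_nonneg v0)
end

section
/- For every α > 0, Λ > 0, positive integer n, real p ≥ 0, and λ ∈ [0, Λ]: if 0 ≤ p ≤ n then λ^p r_{n,α}(λ) ≤ (αp/n)^p (with the convention 0⁰ = 1 when p = 0), and if p > n then λ^p r_{n,α}(λ) ≤ α^n Λ^{p−n}. -/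
/-- `r_{n,α}(λ) = (α/(α+λ))^n`. -/
noncomputable def rFun (n : ℕ) (α l : ℝ) : ℝ := (α / (α + l)) ^ n

private lemma key_bound (α : ℝ) (hα : 0 < α) (N : ℝ) (hN : 0 < N) (p : ℝ)
    (hp : 0 ≤ p) (hpN : p ≤ N) (x : ℝ) (hx : 0 ≤ x) :
    x ^ p * α ^ (N - p) ≤ (p / N) ^ p * (α + x) ^ N := by
  rcases eq_or_lt_of_le hp with hp0 | hp0
  · -- p = 0
    subst hp0
    simp only [Real.rpow_zero, sub_zero, zero_div, one_mul]
    exact Real.rpow_le_rpow hα.le (by linarith) hN.le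
  · -- 0 < p
    set a : ℝ := N * x / p with ha_def
    set b : ℝ := N * α / (N - p) with hb_def
    have ha : 0 ≤ a := div_nonneg (mul_nonneg hN.le hx) hp0.le
    have hb : 0 ≤ b := by
      apply div_nonneg (mul_nonneg hN.le hα.le)
      linarith
    have hw1 : 0 ≤ p / N := div_nonneg hp hN.le
    have hw2 : 0 ≤ (N - p) / N := div_nonneg (by linarith) hN.le
    have hwsum : p / N + (N - p) / N = 1 := by field_simp; ring
    have hAM : a ^ (p / N) * b ^ ((N - p) / N) ≤ p / N * a + (N - p) / N * b :=
      Real.geom_mean_le_arith_mean2_weighted hw1 hw2 ha hb hwsum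
    have h1 : p / N * a = x := by
      rw [ha_def]; field_simp
    have h2 : (N - p) / N * b ≤ α := by
      rcases eq_or_lt_of_le hpN with hpe | hpl
      · subst hpe
        simp [hb_def]
        positivity
      · rw [hb_def]
        have hne : N - p ≠ 0 := ne_of_gt (by linarith)
        have : (N - p) / N * (N * α / (N - p)) = α := by
          field_simp [hne]
        exact le_of_eq this
    have hG : a ^ (p / N) * b ^ ((N - p) / N) ≤ α + x := by
      rw [h1] at hAM; linarith
    have hGnn : (0:ℝ) ≤ a ^ (p / N) * b ^ ((N - p) / N) :=
      mul_nonneg (Real.rpow_nonneg ha _) (Real.rpow_nonneg hb _)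
    have hpow : (a ^ (p / N) * b ^ ((N - p) / N)) ^ N ≤ (α + x) ^ N :=
      Real.rpow_le_rpow hGnn hG hN.le
    have hGN : (a ^ (p / N) * b ^ ((N - p) / N)) ^ N = a ^ p * b ^ (N - p) := by
      rw [Real.mul_rpow (Real.rpow_nonneg ha _) (Real.rpow_nonneg hb _),
        ← Real.rpow_mul ha, ← Real.rpow_mul hb]
      congr 1 <;> congr 1 <;> field_simp
    rw [hGN] at hpow
    -- x ^ p = (p/N)^p * a^p
    have hxp : x ^ p = (p / N) ^ p * a ^ p := by
      rw [← Real.mul_rpow hw1 ha]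
      congr 1
      rw [ha_def]; field_simp
    -- α ^ (N-p) ≤ b ^ (N-p)
    have hab : α ^ (N - p) ≤ b ^ (N - p) := by
      rcases eq_or_lt_of_le hpN with hpe | hpl
      · subst hpe; simp
      · apply Real.rpow_le_rpow hα.le _ (by linarith)
        rw [hb_def, le_div_iff₀ (by linarith)]
        nlinarith
    calc x ^ p * α ^ (N - p) = (p / N) ^ p * (a ^ p * α ^ (N - p)) := by
          rw [hxp]; ring
      _ ≤ (p / N) ^ p * (a ^ p * b ^ (N - p)) := by
          apply mul_le_mul_of_nonneg_left _ (Real.rpow_nonneg hw1 _)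
          exact mul_le_mul_of_nonneg_left hab (Real.rpow_nonneg ha _)
      _ ≤ (p / N) ^ p * (α + x) ^ N :=
          mul_le_mul_of_nonneg_left hpow (Real.rpow_nonneg hw1 _)

/-- For `λ ∈ [0, Λ]` and real `p ≥ 0`:
if `p ≤ n` then `λ^p r_{n,α}(λ) ≤ (αp/n)^p`, and
if `p > n` then `λ^p r_{n,α}(λ) ≤ α^n Λ^{p−n}`. -/
theorem rFun_poly_bounds (α L : ℝ) (hα : 0 < α) (hL : 0 < L)
    (n : ℕ) (hn : 1 ≤ n) (p : ℝ) (hp : 0 ≤ p)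
    (l : ℝ) (hl : l ∈ Set.Icc (0:ℝ) L) :
    (p ≤ (n : ℝ) → l ^ p * rFun n α l ≤ (α * p / (n : ℝ)) ^ p) ∧
      ((n : ℝ) < p → l ^ p * rFun n α l ≤ α ^ n * L ^ (p - (n : ℝ))) := by
  obtain ⟨hl0, hlL⟩ := hl
  have hN : (0:ℝ) < (n:ℝ) := by exact_mod_cast hn
  have hal : (0:ℝ) < α + l := by linarith
  have hrfun : rFun n α l = α ^ (n:ℝ) / (α + l) ^ (n:ℝ) := by
    rw [rFun, ← Real.rpow_natCast (α / (α + l)) n, Real.div_rpow hα.le hal.le]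
  constructor
  · intro hpn
    have hkey := key_bound α hα (n:ℝ) hN p hp hpn l hl0
    rw [hrfun, mul_div_assoc', div_le_iff₀ (Real.rpow_pos_of_pos hal _)]
    calc l ^ p * α ^ (n:ℝ) = (l ^ p * α ^ ((n:ℝ) - p)) * α ^ p := by
          rw [mul_assoc, ← Real.rpow_add hα, sub_add_cancel]
      _ ≤ ((p / (n:ℝ)) ^ p * (α + l) ^ (n:ℝ)) * α ^ p :=
          mul_le_mul_of_nonneg_right hkey (Real.rpow_nonneg hα.le _)
      _ = (α * p / (n:ℝ)) ^ p * (α + l) ^ (n:ℝ) := by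
          rw [show α * p / (n:ℝ) = α * (p / (n:ℝ)) by ring,
            Real.mul_rpow hα.le (div_nonneg hp hN.le)]
          ring
  · intro hpn
    rcases eq_or_lt_of_le hl0 with hl0' | hl0'
    · rw [← hl0', Real.zero_rpow (by intro h; rw [h] at hpn; exact absurd hpn (not_lt.2 hN.le)), zero_mul]
      positivity
    · have hsplit : l ^ p = l ^ (n:ℕ) * l ^ (p - (n:ℝ)) := by
        rw [← Real.rpow_natCast l n, ← Real.rpow_add hl0']
        congr 1; ring
      have h1 : l ^ (n:ℕ) * rFun n α l ≤ α ^ n := by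
        rw [rFun, ← mul_pow]
        apply pow_le_pow_left₀ (by positivity)
        rw [← mul_div_assoc, div_le_iff₀ hal]
        nlinarith
      have h2 : l ^ (p - (n:ℝ)) ≤ L ^ (p - (n:ℝ)) :=
        Real.rpow_le_rpow hl0 hlL (by linarith)
      calc l ^ p * rFun n α l = (l ^ (n:ℕ) * rFun n α l) * l ^ (p - (n:ℝ)) := by
            rw [hsplit]; ring
        _ ≤ α ^ n * L ^ (p - (n:ℝ)) := by
            apply mul_le_mul h1 h2 (Real.rpow_nonneg hl0 _)
            positivity
end

section
/- Averaged error decomposition for scalar 3DVAR: fix real numbers A, K, u†, u₀ and an arbitrary real sequence (η_j)_{j≥1}; set y_n = A u† + η_n, u_n = K y_n + (1 − K A) u_{n−1}, v_n = u_n − u†, v̄_n = (1/n) Σ_{k=1}^n v_k, and η̄_m = (1/m) Σ_{j=1}^m η_j. Then for every n ≥ 1, v̄_n = Σ_{k=0}^{n−1} ((n−k)/n)(1 − K A)^k K η̄_{n−k} + (1/n) Σ_{k=0}^{n−1} (1 − K A)^{k+1} v₀. -/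
open Finset

private lemma reindex_Icc (m : ℕ) (f : ℕ → ℝ) :
    ∑ j ∈ Icc 1 m, f j = ∑ k ∈ range m, f (m - k) := by
  rw [← Finset.Ico_add_one_right_eq_Icc, Finset.sum_Ico_eq_sum_range]
  rw [Nat.add_sub_cancel, ← Finset.sum_range_reflect (fun k => f (1 + k)) m]
  refine Finset.sum_congr rfl fun k hk => ?_
  simp only [Finset.mem_range] at hk
  congr 1
  omega

private lemma swap_sum (b : ℝ) (c : ℕ → ℝ) :
    ∀ n : ℕ, ∑ k ∈ Icc 1 n, ∑ j ∈ Icc 1 k, b ^ (k - j) * c j =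
      ∑ k ∈ range n, b ^ k * ∑ j ∈ Icc 1 (n - k), c j := by
  intro n
  induction n with
  | zero => simp
  | succ n ih =>
    rw [Finset.sum_Icc_succ_top (by omega), ih,
      reindex_Icc (n + 1) (fun j => b ^ (n + 1 - j) * c j)]
    have h2 : ∑ k ∈ range (n + 1), b ^ (n + 1 - (n + 1 - k)) * c (n + 1 - k)
        = ∑ k ∈ range (n + 1), b ^ k * c (n + 1 - k) := by
      refine Finset.sum_congr rfl fun k hk => ?_
      simp only [Finset.mem_range] at hk
      congr 2
      omega
    rw [h2]
    have h1 : ∀ k ∈ range n, b ^ k * ∑ j ∈ Icc 1 (n + 1 - k), c j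
        = b ^ k * ∑ j ∈ Icc 1 (n - k), c j + b ^ k * c (n + 1 - k) := by
      intro k hk
      simp only [Finset.mem_range] at hk
      rw [show n + 1 - k = (n - k) + 1 by omega,
        Finset.sum_Icc_succ_top (by omega), mul_add,
        show (n - k) + 1 = n + 1 - k by omega]
    conv_rhs => rw [Finset.sum_range_succ, Finset.sum_congr rfl h1,
      Finset.sum_add_distrib]
    conv_lhs => rw [Finset.sum_range_succ]
    have hn1 : n + 1 - n = 1 := by omega
    simp only [hn1, Finset.Icc_self, Finset.sum_singleton]
    ring

/-- Averaged error decomposition for scalar 3DVAR: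
`v̄_n = Σ_{k=0}^{n−1} ((n−k)/n)(1−KA)^k K η̄_{n−k} + (1/n) Σ_{k=0}^{n−1} (1−KA)^{k+1} v₀`. -/
theorem scalar_3dvar_averaged_error_decomposition
    (A K udag u0 : ℝ) (η : ℕ → ℝ)
    (y : ℕ → ℝ) (hy : ∀ n, 1 ≤ n → y n = A * udag + η n)
    (u : ℕ → ℝ) (hu0 : u 0 = u0)
    (hu : ∀ n : ℕ, u (n + 1) = K * y (n + 1) + (1 - K * A) * u n) :
    ∀ n : ℕ, 1 ≤ n →
      (1 / (n : ℝ)) * ∑ k ∈ Icc 1 n, (u k - udag) =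
        (∑ k ∈ range n, (((n - k : ℕ) : ℝ) / (n : ℝ)) * (1 - K * A) ^ k * K *
            ((1 / ((n - k : ℕ) : ℝ)) * ∑ j ∈ Icc 1 (n - k), η j)) +
          (1 / (n : ℝ)) * ∑ k ∈ range n, (1 - K * A) ^ (k + 1) * (u0 - udag) := by
  set b := 1 - K * A with hb
  -- closed form for the error
  have hv : ∀ m : ℕ, u m - udag =
      (∑ j ∈ Icc 1 m, b ^ (m - j) * (K * η j)) + b ^ m * (u0 - udag) := by
    intro m
    induction m with
    | zero => simp [hu0]
    | succ m ih =>
      have hym := hy (m + 1) (by omega)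
      have : u (m + 1) - udag = K * η (m + 1) + b * (u m - udag) := by
        rw [hu m, hym, hb]; ring
      rw [this, ih, Finset.sum_Icc_succ_top (by omega)]
      have hcong : ∀ j ∈ Icc 1 m, b ^ (m + 1 - j) * (K * η j)
          = b * (b ^ (m - j) * (K * η j)) := by
        intro j hj
        simp only [Finset.mem_Icc] at hj
        rw [show m + 1 - j = (m - j) + 1 by omega, pow_succ]
        ring
      rw [Finset.sum_congr rfl hcong, ← Finset.mul_sum]
      have : m + 1 - (m + 1) = 0 := by omega
      rw [this]
      ring
  intro n hn
  -- rewrite the LHS sum using the closed form and swap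
  have hL : ∑ k ∈ Icc 1 n, (u k - udag)
      = (∑ k ∈ range n, b ^ k * ∑ j ∈ Icc 1 (n - k), K * η j)
        + ∑ k ∈ Icc 1 n, b ^ k * (u0 - udag) := by
    rw [Finset.sum_congr rfl (fun k _ => hv k), Finset.sum_add_distrib,
      swap_sum b (fun j => K * η j) n]
  have hIcc : ∑ k ∈ Icc 1 n, b ^ k * (u0 - udag)
      = ∑ k ∈ range n, b ^ (k + 1) * (u0 - udag) := by
    rw [← Finset.Ico_add_one_right_eq_Icc, Finset.sum_Ico_eq_sum_range, Nat.add_sub_cancel]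
    refine Finset.sum_congr rfl fun k hk => ?_
    rw [add_comm 1 k]
  have hRHS : ∀ k ∈ range n, (((n - k : ℕ) : ℝ) / (n : ℝ)) * b ^ k * K *
      ((1 / ((n - k : ℕ) : ℝ)) * ∑ j ∈ Icc 1 (n - k), η j)
      = (1 / (n : ℝ)) * (b ^ k * ∑ j ∈ Icc 1 (n - k), K * η j) := by
    intro k hk
    simp only [Finset.mem_range] at hk
    have h1 : ((n - k : ℕ) : ℝ) ≠ 0 := Nat.cast_ne_zero.mpr (by omega)
    rw [← Finset.mul_sum]
    field_simp
  rw [hL, hIcc, Finset.sum_congr rfl hRHS, ← Finset.mul_sum]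
  ring
end

section
/- Bias bound for iterate-averaged 3DVAR in the simultaneously diagonalized case: under the diagonal setup, suppose the initial error sequence (v_{0,i})_{i≥1} satisfies Σ_{i=1}^∞ i^{2β} v_{0,i}² < ∞, and let τ_b ∈ [0,1] satisfy τ_b ≤ (t(1+2ε) + 2β)/(2(1 + 2ε + 2p)). Then there exists a constant C > 0 such that for every n ≥ 1 and the given α, the squared bias B_n(α) = (α/n)² Σ_{i=1}^∞ σ_i^t q_{n,α}(σ_i a_i²)² v_{0,i}² satisfies B_n(α) ≤ C (n/α)^{−2τ_b}. -/
open Finset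

/-- Squared bias of iterate-averaged 3DVAR in the diagonal case (sequences are 1-based):
`B_n(α) = (α/n)² Σ_{i≥1} σ_i^t q_{n,α}(σ_i a_i²)² v_{0,i}²`. -/
noncomputable def Bterm (σ a v0 : ℕ → ℝ) (t : ℝ) (α : ℝ) (n : ℕ) : ℝ :=
  (α / (n : ℝ)) ^ 2 *
    ∑' i : ℕ, (σ (i + 1)) ^ t * (qFun n α (σ (i + 1) * (a (i + 1)) ^ 2)) ^ 2 * (v0 (i + 1)) ^ 2

/-- Variance term of iterate-averaged 3DVAR in the diagonal case (sequences are 1-based):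
`V_n(α) = (γ²/n²) Σ_{j=1}^n Σ_{i≥1} σ_i^{t+2} a_i² q_{j,α}(σ_i a_i²)²`. -/
noncomputable def Vterm (σ a : ℕ → ℝ) (t γ : ℝ) (α : ℝ) (n : ℕ) : ℝ :=
  (γ ^ 2 / (n : ℝ) ^ 2) *
    ∑ j ∈ Icc 1 n, ∑' i : ℕ,
      (σ (i + 1)) ^ (t + 2) * (a (i + 1)) ^ 2 * (qFun j α (σ (i + 1) * (a (i + 1)) ^ 2)) ^ 2

set_option maxHeartbeats 1000000 in
/-- Bias bound for iterate-averaged 3DVAR in the simultaneously diagonalized case: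
if `Σ i^{2β} v_{0,i}² < ∞` and `τ_b ≤ (t(1+2ε)+2β)/(2(1+2ε+2p))`, `τ_b ∈ [0,1]`, then
`B_n(α) ≤ C (n/α)^{−2τ_b}`. -/
theorem diagonal_bias_bound
    (ε p α t β : ℝ) (hε : 0 < ε) (hp : 0 < p) (hα : 0 < α) (ht : 0 ≤ t) (hβ : 0 ≤ β)
    (σ a v0 : ℕ → ℝ) (c₁ c₂ : ℝ) (hc₁ : 0 < c₁) (hc₁₂ : c₁ ≤ c₂)
    (hσ : ∀ i : ℕ, 1 ≤ i → c₁ * (i : ℝ) ^ (-1 - 2 * ε) ≤ σ i ∧ σ i ≤ c₂ * (i : ℝ) ^ (-1 - 2 * ε))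
    (ha : ∀ i : ℕ, 1 ≤ i → c₁ * (i : ℝ) ^ (-p) ≤ a i ∧ a i ≤ c₂ * (i : ℝ) ^ (-p))
    (hv : Summable (fun i : ℕ => ((i : ℝ) + 1) ^ (2 * β) * (v0 (i + 1)) ^ 2))
    (τb : ℝ) (hτb0 : 0 ≤ τb) (hτb1 : τb ≤ 1)
    (hτb : τb ≤ (t * (1 + 2 * ε) + 2 * β) / (2 * (1 + 2 * ε + 2 * p))) :
    ∃ C : ℝ, 0 < C ∧ ∀ n : ℕ, 1 ≤ n →
      Bterm σ a v0 t α n ≤ C * ((n : ℝ) / α) ^ (-(2 * τb)) := by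
  have hc₂ : 0 < c₂ := lt_of_lt_of_le hc₁ hc₁₂
  have hden : (0:ℝ) < 2 * (1 + 2 * ε + 2 * p) := by nlinarith
  have hE : 2 * τb * (1 + 2 * ε + 2 * p) ≤ t * (1 + 2 * ε) + 2 * β := by
    have h := mul_le_mul_of_nonneg_right hτb hden.le
    rw [div_mul_cancel₀ _ hden.ne'] at h
    nlinarith
  set K : ℝ := c₂ ^ t * (c₁ ^ 3) ^ (-(2 * τb)) with hKdef
  have hK : 0 < K :=
    mul_pos (Real.rpow_pos_of_pos hc₂ t) (Real.rpow_pos_of_pos (by positivity) _)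
  set S : ℝ := ∑' i : ℕ, ((i : ℝ) + 1) ^ (2 * β) * (v0 (i + 1)) ^ 2 with hSdef
  have hS : 0 ≤ S := tsum_nonneg fun i => by positivity
  refine ⟨K * (S + 1), by positivity, fun n hn => ?_⟩
  have hn0 : (0:ℝ) < (n:ℝ) := by exact_mod_cast hn.trans_lt' Nat.zero_lt_one
  have hτ2 : (0:ℝ) ≤ 2 * τb := by linarith
  have key : ∀ i : ℕ,
      (α / (n:ℝ)) ^ 2 *
          ((σ (i + 1)) ^ t * (qFun n α (σ (i + 1) * (a (i + 1)) ^ 2)) ^ 2 * (v0 (i + 1)) ^ 2)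
        ≤ (α / (n:ℝ)) ^ (2 * τb) *
            (K * (((i : ℝ) + 1) ^ (2 * β) * (v0 (i + 1)) ^ 2)) := by
    intro i
    have hi : 1 ≤ i + 1 := Nat.le_add_left 1 i
    obtain ⟨hσl, hσu⟩ := hσ (i + 1) hi
    obtain ⟨hal, hau⟩ := ha (i + 1) hi
    push_cast at hσl hσu hal hau
    set x : ℝ := (i : ℝ) + 1 with hxdef
    have hx1 : (1:ℝ) ≤ x := by rw [hxdef]; simp
    have hx0 : (0:ℝ) < x := by linarith
    have hσ0 : 0 < σ (i + 1) := lt_of_lt_of_le (by positivity) hσl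
    have ha0 : 0 < a (i + 1) := lt_of_lt_of_le (by positivity) hal
    set l : ℝ := σ (i + 1) * (a (i + 1)) ^ 2 with hldef
    have hl0 : 0 < l := by rw [hldef]; positivity
    -- bounds on q
    have hr0 : (0:ℝ) ≤ α / (α + l) := by positivity
    have hr1 : α / (α + l) < 1 := by rw [div_lt_one (by linarith)]; linarith
    have hq0 : 0 < qFun n α l := by
      have hlt : (α / (α + l)) ^ n < 1 :=
        pow_lt_one₀ hr0 hr1 (Nat.one_le_iff_ne_zero.mp hn)
      have : 0 < 1 - (α / (α + l)) ^ n := by linarith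
      exact mul_pos (inv_pos.mpr hl0) this
    have hqle1 : qFun n α l ≤ l⁻¹ := by
      have h1 : 1 - (α / (α + l)) ^ n ≤ 1 := by nlinarith [pow_nonneg hr0 n]
      calc l⁻¹ * (1 - (α / (α + l)) ^ n) ≤ l⁻¹ * 1 :=
            mul_le_mul_of_nonneg_left h1 (inv_nonneg.mpr hl0.le)
        _ = l⁻¹ := mul_one _
    have hqle2 : (α / (n:ℝ)) * qFun n α l ≤ 1 := by
      have hber : 1 - (α / (α + l)) ^ n ≤ (n:ℝ) * (l / (α + l)) := by
        have h := one_add_mul_le_pow (by linarith : (-2:ℝ) ≤ α / (α + l) - 1) n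
        rw [show (1 + (α / (α + l) - 1)) = α / (α + l) from by ring] at h
        have hr : 1 - α / (α + l) = l / (α + l) := by field_simp; ring
        nlinarith [h]
      have hq : qFun n α l ≤ (n:ℝ) / (α + l) := by
        calc l⁻¹ * (1 - (α / (α + l)) ^ n) ≤ l⁻¹ * ((n:ℝ) * (l / (α + l))) :=
              mul_le_mul_of_nonneg_left hber (inv_nonneg.mpr hl0.le)
          _ = (n:ℝ) / (α + l) := by
            rw [div_eq_mul_inv, div_eq_mul_inv,
              show l⁻¹ * ((n:ℝ) * (l * (α + l)⁻¹)) = (l⁻¹ * l) * ((n:ℝ) * (α + l)⁻¹) from by ring,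
              inv_mul_cancel₀ hl0.ne', one_mul]
      calc (α / (n:ℝ)) * qFun n α l ≤ (α / (n:ℝ)) * ((n:ℝ) / (α + l)) :=
            mul_le_mul_of_nonneg_left hq (by positivity)
        _ = α / (α + l) := by
          rw [div_mul_div_comm, mul_comm α (n:ℝ), mul_div_mul_left _ _ hn0.ne']
        _ ≤ 1 := hr1.le
    set A : ℝ := (α / (n:ℝ)) * qFun n α l with hAdef
    have hA0 : 0 < A := mul_pos (by positivity) hq0
    have hAle : A ≤ (α / (n:ℝ)) * l⁻¹ :=
      mul_le_mul_of_nonneg_left hqle1 (by positivity)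
    have h1 : A ^ (2:ℕ) ≤ A ^ (2 * τb) := by
      rw [← Real.rpow_natCast A 2]
      exact Real.rpow_le_rpow_of_exponent_ge hA0 hqle2 (by push_cast; linarith)
    have h2 : A ^ (2 * τb) ≤ ((α / (n:ℝ)) * l⁻¹) ^ (2 * τb) :=
      Real.rpow_le_rpow hA0.le hAle hτ2
    have h3 : ((α / (n:ℝ)) * l⁻¹) ^ (2 * τb)
        = (α / (n:ℝ)) ^ (2 * τb) * l ^ (-(2 * τb)) := by
      rw [Real.mul_rpow (by positivity) (by positivity), Real.inv_rpow hl0.le,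
        ← Real.rpow_neg hl0.le]
    -- lower bound on l
    have hsq : (c₁ * x ^ (-p)) ^ 2 = c₁ ^ 2 * (x ^ (-p) * x ^ (-p)) := by ring
    have hcomb : x ^ (-1 - 2 * ε) * (x ^ (-p) * x ^ (-p)) = x ^ (-(1 + 2 * ε + 2 * p)) := by
      rw [← Real.rpow_add hx0, ← Real.rpow_add hx0]
      rw [show (-1 - 2*ε + (-p + -p)) = -(1 + 2*ε + 2*p) from by ring]
    have hllb : c₁ ^ 3 * x ^ (-(1 + 2 * ε + 2 * p)) ≤ l := by
      have ha2 : (c₁ * x ^ (-p)) ^ 2 ≤ (a (i + 1)) ^ 2 :=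
        pow_le_pow_left₀ (by positivity) hal 2
      calc c₁ ^ 3 * x ^ (-(1 + 2 * ε + 2 * p))
          = (c₁ * x ^ (-1 - 2 * ε)) * (c₁ * x ^ (-p)) ^ 2 := by
            rw [hsq, ← hcomb]; ring
        _ ≤ σ (i + 1) * (a (i + 1)) ^ 2 :=
            mul_le_mul hσl ha2 (by positivity) hσ0.le
        _ = l := hldef.symm
    have hlneg : l ^ (-(2 * τb))
        ≤ (c₁ ^ 3) ^ (-(2 * τb)) * (x ^ (-(1 + 2 * ε + 2 * p))) ^ (-(2 * τb)) := by
      rw [← Real.mul_rpow (by positivity) (by positivity)]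
      exact Real.rpow_le_rpow_of_nonpos (by positivity) hllb (by linarith)
    have hσt : (σ (i + 1)) ^ t ≤ c₂ ^ t * (x ^ (-1 - 2 * ε)) ^ t := by
      rw [← Real.mul_rpow hc₂.le (by positivity)]
      exact Real.rpow_le_rpow hσ0.le hσu ht
    have hxpow : (x ^ (-1 - 2 * ε)) ^ t * (x ^ (-(1 + 2 * ε + 2 * p))) ^ (-(2 * τb))
        ≤ x ^ (2 * β) := by
      rw [← Real.rpow_mul hx0.le, ← Real.rpow_mul hx0.le, ← Real.rpow_add hx0]
      exact Real.rpow_le_rpow_of_exponent_le hx1 (by nlinarith [hE])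
    have hmain : (σ (i + 1)) ^ t * l ^ (-(2 * τb)) ≤ K * x ^ (2 * β) := by
      calc (σ (i + 1)) ^ t * l ^ (-(2 * τb))
          ≤ (c₂ ^ t * (x ^ (-1 - 2 * ε)) ^ t) *
              ((c₁ ^ 3) ^ (-(2 * τb)) * (x ^ (-(1 + 2 * ε + 2 * p))) ^ (-(2 * τb))) :=
            mul_le_mul hσt hlneg (by positivity) (by positivity)
        _ = K * ((x ^ (-1 - 2 * ε)) ^ t * (x ^ (-(1 + 2 * ε + 2 * p))) ^ (-(2 * τb))) := by
            rw [hKdef]; ring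
        _ ≤ K * x ^ (2 * β) := mul_le_mul_of_nonneg_left hxpow hK.le
    have hv2 : (0:ℝ) ≤ (v0 (i + 1)) ^ 2 := sq_nonneg _
    calc (α / (n:ℝ)) ^ 2 * ((σ (i + 1)) ^ t * (qFun n α l) ^ 2 * (v0 (i + 1)) ^ 2)
        = (σ (i + 1)) ^ t * (v0 (i + 1)) ^ 2 * A ^ 2 := by rw [hAdef]; ring
      _ ≤ (σ (i + 1)) ^ t * (v0 (i + 1)) ^ 2 *
            ((α / (n:ℝ)) ^ (2 * τb) * l ^ (-(2 * τb))) := by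
          refine mul_le_mul_of_nonneg_left ?_ (by positivity)
          rw [← h3]; exact le_trans h1 h2
      _ = (α / (n:ℝ)) ^ (2 * τb) *
            ((σ (i + 1)) ^ t * l ^ (-(2 * τb)) * (v0 (i + 1)) ^ 2) := by ring
      _ ≤ (α / (n:ℝ)) ^ (2 * τb) * (K * (x ^ (2 * β) * (v0 (i + 1)) ^ 2)) := by
          refine mul_le_mul_of_nonneg_left ?_ (by positivity)
          calc (σ (i + 1)) ^ t * l ^ (-(2 * τb)) * (v0 (i + 1)) ^ 2
              ≤ K * x ^ (2 * β) * (v0 (i + 1)) ^ 2 :=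
                mul_le_mul_of_nonneg_right hmain hv2
            _ = K * (x ^ (2 * β) * (v0 (i + 1)) ^ 2) := by ring
  -- sum up
  have hσpos : ∀ i : ℕ, 0 < σ (i + 1) := fun i =>
    lt_of_lt_of_le (by positivity) (hσ (i + 1) (Nat.le_add_left 1 i)).1
  have hfnn : ∀ i : ℕ, 0 ≤ (α / (n:ℝ)) ^ 2 *
      ((σ (i + 1)) ^ t * (qFun n α (σ (i + 1) * (a (i + 1)) ^ 2)) ^ 2 * (v0 (i + 1)) ^ 2) :=
    fun i => mul_nonneg (by positivity)
      (mul_nonneg (mul_nonneg (Real.rpow_nonneg (hσpos i).le t) (sq_nonneg _)) (sq_nonneg _))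
  have hg : Summable (fun i : ℕ => (α / (n:ℝ)) ^ (2 * τb) *
      (K * (((i : ℝ) + 1) ^ (2 * β) * (v0 (i + 1)) ^ 2))) :=
    (hv.mul_left K).mul_left _
  have hBle : Bterm σ a v0 t α n ≤ ∑' i : ℕ, (α / (n:ℝ)) ^ (2 * τb) *
      (K * (((i : ℝ) + 1) ^ (2 * β) * (v0 (i + 1)) ^ 2)) := by
    unfold Bterm
    rw [← tsum_mul_left]
    exact Summable.tsum_le_tsum key (Summable.of_nonneg_of_le hfnn key hg) hg
  have hsum : ∑' i : ℕ, (α / (n:ℝ)) ^ (2 * τb) *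
      (K * (((i : ℝ) + 1) ^ (2 * β) * (v0 (i + 1)) ^ 2))
      = (α / (n:ℝ)) ^ (2 * τb) * (K * S) := by
    rw [tsum_mul_left, tsum_mul_left, hSdef]
  have hflip : (α / (n:ℝ)) ^ (2 * τb) = ((n:ℝ) / α) ^ (-(2 * τb)) := by
    rw [Real.rpow_neg (by positivity), ← Real.inv_rpow (by positivity), inv_div]
  calc Bterm σ a v0 t α n ≤ (α / (n:ℝ)) ^ (2 * τb) * (K * S) := hsum ▸ hBle
    _ ≤ (α / (n:ℝ)) ^ (2 * τb) * (K * (S + 1)) := by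
        refine mul_le_mul_of_nonneg_left ?_ (by positivity)
        nlinarith [hK]
    _ = K * (S + 1) * ((n:ℝ) / α) ^ (-(2 * τb)) := by rw [← hflip]; ring
end

section
/- Variance bound for iterate-averaged 3DVAR in the simultaneously diagonalized case: under the diagonal setup, fix γ > 0 and let τ_v ∈ [0,1] satisfy τ_v < (t(1+2ε) + 2ε)/(1 + 2ε + 2p). Then there exists a constant C > 0 such that for every n ≥ 1 and the given α, the variance term V_n(α) = (γ²/n²) Σ_{j=1}^{n} Σ_{i=1}^∞ σ_i^{t+2} a_i² q_{j,α}(σ_i a_i²)² satisfies V_n(α) ≤ C (γ²/α)(n/α)^{−τ_v}. -/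
open Finset

lemma qFun_nonneg (n : ℕ) {α l : ℝ} (hα : 0 < α) (hl : 0 < l) : 0 ≤ qFun n α l := by
  have hx0 : 0 ≤ α / (α + l) := by positivity
  have hx1 : α / (α + l) ≤ 1 := by
    rw [div_le_one (by linarith)]; linarith
  have h : (α / (α + l)) ^ n ≤ 1 := pow_le_one₀ hx0 hx1
  exact mul_nonneg (inv_nonneg.2 hl.le) (by linarith)

lemma qFun_le_inv (n : ℕ) {α l : ℝ} (hα : 0 < α) (hl : 0 < l) : qFun n α l ≤ l⁻¹ := by
  have hx0 : 0 ≤ α / (α + l) := by positivity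
  have hpow : 0 ≤ (α / (α + l)) ^ n := pow_nonneg hx0 n
  calc qFun n α l ≤ l⁻¹ * 1 :=
        mul_le_mul_of_nonneg_left (by linarith) (inv_nonneg.2 hl.le)
    _ = l⁻¹ := mul_one _

lemma qFun_le_div (n : ℕ) {α l : ℝ} (hα : 0 < α) (hl : 0 < l) : qFun n α l ≤ n / α := by
  have hal : 0 < α + l := by linarith
  set x := α / (α + l) with hxdef
  have hx1 : x ≤ 1 := by rw [hxdef, div_le_one hal]; linarith
  have hx0 : 0 ≤ x := by rw [hxdef]; positivity
  have hb : 1 + (n : ℝ) * (x - 1) ≤ x ^ n := by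
    have := one_add_mul_le_pow (a := x - 1) (by linarith) n
    simpa using this
  have h1x : 1 - x = l / (α + l) := by
    rw [hxdef]; field_simp; ring
  have hstep : qFun n α l ≤ l⁻¹ * ((n : ℝ) * (l / (α + l))) := by
    unfold qFun
    apply mul_le_mul_of_nonneg_left _ (inv_nonneg.2 hl.le)
    rw [← hxdef, ← h1x]; nlinarith
  calc qFun n α l ≤ l⁻¹ * ((n : ℝ) * (l / (α + l))) := hstep
    _ = (n : ℝ) / (α + l) := by field_simp
    _ ≤ (n : ℝ) / α := by gcongr; linarith

/-- Variance bound for iterate-averaged 3DVAR in the simultaneously diagonalized case: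
if `τ_v ∈ [0,1]` and `τ_v < (t(1+2ε)+2ε)/(1+2ε+2p)`, then
`V_n(α) ≤ C (γ²/α)(n/α)^{−τ_v}`. -/
theorem diagonal_variance_bound
    (ε p α t β γ : ℝ) (hε : 0 < ε) (hp : 0 < p) (hα : 0 < α) (ht : 0 ≤ t) (hβ : 0 ≤ β)
    (hγ : 0 < γ)
    (σ a : ℕ → ℝ) (c₁ c₂ : ℝ) (hc₁ : 0 < c₁) (hc₁₂ : c₁ ≤ c₂)
    (hσ : ∀ i : ℕ, 1 ≤ i → c₁ * (i : ℝ) ^ (-1 - 2 * ε) ≤ σ i ∧ σ i ≤ c₂ * (i : ℝ) ^ (-1 - 2 * ε))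
    (ha : ∀ i : ℕ, 1 ≤ i → c₁ * (i : ℝ) ^ (-p) ≤ a i ∧ a i ≤ c₂ * (i : ℝ) ^ (-p))
    (τv : ℝ) (hτv0 : 0 ≤ τv) (hτv1 : τv ≤ 1)
    (hτv : τv < (t * (1 + 2 * ε) + 2 * ε) / (1 + 2 * ε + 2 * p)) :
    ∃ C : ℝ, 0 < C ∧ ∀ n : ℕ, 1 ≤ n →
      Vterm σ a t γ α n ≤ C * (γ ^ 2 / α) * ((n : ℝ) / α) ^ (-τv) := by
  have hc₂ : 0 < c₂ := lt_of_lt_of_le hc₁ hc₁₂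
  set s : ℝ := 1 - τv with hs
  have hs0 : 0 ≤ s := by rw [hs]; linarith
  have hs1 : s ≤ 1 := by rw [hs]; linarith
  have hden : 0 < 1 + 2 * ε + 2 * p := by linarith
  set r : ℝ := (1 + 2 * ε) * (t + s) - 2 * p * τv with hr
  have hr1 : 1 < r := by
    have h := (lt_div_iff₀ hden).1 hτv
    rw [hr, hs]; nlinarith
  -- summability of the majorant
  have hgsum : Summable (fun i : ℕ => ((i : ℝ) + 1) ^ (-r)) := by
    have h := (Real.summable_nat_rpow (p := -r)).2 (by linarith)
    have h2 := (summable_nat_add_iff 1).2 h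
    refine h2.congr fun i => ?_
    push_cast; ring_nf
  set M : ℝ := ∑' i : ℕ, ((i : ℝ) + 1) ^ (-r) with hM
  have hM1 : (1 : ℝ) ≤ M := by
    have h := Summable.le_tsum hgsum 0 (fun i _ => Real.rpow_nonneg (by positivity) _)
    simpa using h
  set K : ℝ := c₂ ^ (t + s) * c₁ ^ (2 * s - 2) with hK
  have hKpos : 0 < K := by
    have := Real.rpow_pos_of_pos hc₂ (t + s)
    have := Real.rpow_pos_of_pos hc₁ (2 * s - 2)
    positivity
  refine ⟨K * M, by positivity, fun n hn => ?_⟩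
  have hn0 : 0 < (n : ℝ) := by exact_mod_cast hn
  -- positivity of sequences
  have hσpos : ∀ i : ℕ, 1 ≤ i → 0 < σ i := fun i hi =>
    lt_of_lt_of_le (by positivity) (hσ i hi).1
  have hapos : ∀ i : ℕ, 1 ≤ i → 0 < a i := fun i hi =>
    lt_of_lt_of_le (by positivity) (ha i hi).1
  -- pointwise bound on terms of the inner sum
  have key : ∀ j : ℕ, ∀ i : ℕ,
      (σ (i + 1)) ^ (t + 2) * (a (i + 1)) ^ 2 *
          (qFun j α (σ (i + 1) * (a (i + 1)) ^ 2)) ^ 2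
        ≤ ((j : ℝ) / α) ^ s * (K * ((i : ℝ) + 1) ^ (-r)) := by
    intro j i
    have hi1 : 1 ≤ i + 1 := Nat.le_add_left 1 i
    set x := σ (i + 1) with hxd
    set y := a (i + 1) with hyd
    have hx : 0 < x := hσpos _ hi1
    have hy : 0 < y := hapos _ hi1
    have hI : (0 : ℝ) < ((i : ℕ) + 1 : ℕ) := by positivity
    set I : ℝ := ((i + 1 : ℕ) : ℝ) with hId
    have hIpos : 0 < I := by rw [hId]; positivity
    set l : ℝ := x * y ^ 2 with hld
    have hl : 0 < l := by rw [hld]; positivity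
    set q := qFun j α l with hqd
    have hq0 : 0 ≤ q := qFun_nonneg j hα hl
    have hq1 : q ≤ (j : ℝ) / α := qFun_le_div j hα hl
    have hq2 : q ≤ l⁻¹ := qFun_le_inv j hα hl
    have hqsq : q ^ 2 ≤ ((j : ℝ) / α) ^ s * (l⁻¹) ^ (2 - s) := by
      rcases eq_or_lt_of_le hq0 with h | h
      · rw [← h]
        have : (0:ℝ) ^ 2 = 0 := by norm_num
        rw [this]
        have h1 : (0:ℝ) ≤ ((j : ℝ) / α) ^ s := Real.rpow_nonneg (by positivity) _
        have h2 : (0:ℝ) ≤ (l⁻¹) ^ (2 - s) := Real.rpow_nonneg (by positivity) _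
        positivity
      · calc q ^ 2 = q ^ s * q ^ (2 - s) := by
              rw [← Real.rpow_natCast q 2, ← Real.rpow_add h]
              norm_num
          _ ≤ ((j : ℝ) / α) ^ s * (l⁻¹) ^ (2 - s) := by
              apply mul_le_mul (Real.rpow_le_rpow hq0 hq1 hs0)
                (Real.rpow_le_rpow hq0 hq2 (by linarith))
                (Real.rpow_nonneg hq0 _) (Real.rpow_nonneg (by positivity) _)
    have hlr : (l⁻¹) ^ (2 - s) = l ^ (s - 2) := by
      rw [Real.inv_rpow hl.le, ← Real.rpow_neg hl.le]
      ring_nf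
    -- algebraic identity
    have hy2 : y ^ 2 = y ^ (2:ℝ) := by
      rw [← Real.rpow_natCast y 2]; norm_num
    have hmul : x ^ (t + 2) * y ^ 2 * l ^ (s - 2) = x ^ (t + s) * y ^ (2 * s - 2) := by
      rw [hld, Real.mul_rpow hx.le (by positivity : (0:ℝ) ≤ y ^ 2), hy2,
        ← Real.rpow_mul hy.le, mul_mul_mul_comm, ← Real.rpow_add hx,
        ← Real.rpow_add hy, show t + 2 + (s - 2) = t + s by ring,
        show (2:ℝ) + 2 * (s - 2) = 2 * s - 2 by ring]
    have halg : x ^ (t + 2) * y ^ 2 * (((j:ℝ)/α) ^ s * l ^ (s - 2))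
        = ((j:ℝ)/α) ^ s * (x ^ (t + s) * y ^ (2 * s - 2)) := by
      rw [← hmul]; ring
    have hstep1 : x ^ (t + 2) * y ^ 2 * q ^ 2
        ≤ ((j:ℝ)/α) ^ s * (x ^ (t + s) * y ^ (2 * s - 2)) := by
      rw [← halg]
      have hx2 : (0:ℝ) ≤ x ^ (t + 2) * y ^ 2 := by positivity
      calc x ^ (t + 2) * y ^ 2 * q ^ 2
          ≤ x ^ (t + 2) * y ^ 2 * (((j:ℝ)/α) ^ s * (l⁻¹) ^ (2 - s)) :=
            mul_le_mul_of_nonneg_left hqsq hx2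
        _ = x ^ (t + 2) * y ^ 2 * (((j:ℝ)/α) ^ s * l ^ (s - 2)) := by rw [hlr]
    -- bound x ^ (t+s) and y ^ (2s-2)
    have hxb : x ^ (t + s) ≤ c₂ ^ (t + s) * I ^ ((-1 - 2*ε) * (t + s)) := by
      have h1 : x ≤ c₂ * I ^ (-1 - 2*ε) := (hσ _ hi1).2
      calc x ^ (t + s) ≤ (c₂ * I ^ (-1 - 2*ε)) ^ (t + s) :=
            Real.rpow_le_rpow hx.le h1 (by linarith)
        _ = c₂ ^ (t + s) * I ^ ((-1 - 2*ε) * (t + s)) := by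
            rw [Real.mul_rpow hc₂.le (Real.rpow_nonneg hIpos.le _),
              ← Real.rpow_mul hIpos.le]
    have hyb : y ^ (2 * s - 2) ≤ c₁ ^ (2 * s - 2) * I ^ ((-p) * (2 * s - 2)) := by
      have h1 : c₁ * I ^ (-p) ≤ y := (ha _ hi1).1
      have h2 : 0 < c₁ * I ^ (-p) := by
        have := Real.rpow_pos_of_pos hIpos (-p); positivity
      calc y ^ (2 * s - 2) ≤ (c₁ * I ^ (-p)) ^ (2 * s - 2) :=
            Real.rpow_le_rpow_of_nonpos h2 h1 (by linarith)
        _ = c₁ ^ (2 * s - 2) * I ^ ((-p) * (2 * s - 2)) := by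
            rw [Real.mul_rpow hc₁.le (Real.rpow_nonneg hIpos.le _),
              ← Real.rpow_mul hIpos.le]
    have hexp : (-1 - 2*ε) * (t + s) + (-p) * (2 * s - 2) = -r := by
      rw [hr, hs]; ring
    have hprod : x ^ (t + s) * y ^ (2 * s - 2) ≤ K * I ^ (-r) := by
      calc x ^ (t + s) * y ^ (2 * s - 2)
          ≤ (c₂ ^ (t + s) * I ^ ((-1 - 2*ε) * (t + s))) *
            (c₁ ^ (2 * s - 2) * I ^ ((-p) * (2 * s - 2))) := by
            apply mul_le_mul hxb hyb (Real.rpow_nonneg hy.le _)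
            have := Real.rpow_nonneg hIpos.le ((-1 - 2*ε) * (t + s))
            have := Real.rpow_nonneg hc₂.le (t + s)
            positivity
        _ = K * (I ^ ((-1 - 2*ε) * (t + s)) * I ^ ((-p) * (2 * s - 2))) := by
            rw [hK]; ring
        _ = K * I ^ (-r) := by rw [← Real.rpow_add hIpos, hexp]
    have hIeq : I = (i : ℝ) + 1 := by rw [hId]; push_cast; ring
    calc x ^ (t + 2) * y ^ 2 * q ^ 2
        ≤ ((j:ℝ)/α) ^ s * (x ^ (t + s) * y ^ (2 * s - 2)) := hstep1
      _ ≤ ((j:ℝ)/α) ^ s * (K * ((i : ℝ) + 1) ^ (-r)) := by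
          rw [← hIeq]
          exact mul_le_mul_of_nonneg_left hprod (Real.rpow_nonneg (by positivity) _)
  -- bound each inner tsum
  have htsum : ∀ j : ℕ, (∑' i : ℕ,
      (σ (i + 1)) ^ (t + 2) * (a (i + 1)) ^ 2 *
        (qFun j α (σ (i + 1) * (a (i + 1)) ^ 2)) ^ 2)
      ≤ ((j : ℝ) / α) ^ s * (K * M) := by
    intro j
    have hbsum : Summable (fun i : ℕ => ((j:ℝ)/α) ^ s * (K * ((i : ℝ) + 1) ^ (-r))) :=
      (hgsum.mul_left K).mul_left _
    have hf0 : ∀ i : ℕ, 0 ≤ (σ (i + 1)) ^ (t + 2) * (a (i + 1)) ^ 2 *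
        (qFun j α (σ (i + 1) * (a (i + 1)) ^ 2)) ^ 2 := by
      intro i
      have hx := hσpos (i+1) (Nat.le_add_left 1 i)
      have hy := hapos (i+1) (Nat.le_add_left 1 i)
      have := Real.rpow_nonneg hx.le (t + 2)
      positivity
    have hfsum : Summable (fun i : ℕ => (σ (i + 1)) ^ (t + 2) * (a (i + 1)) ^ 2 *
        (qFun j α (σ (i + 1) * (a (i + 1)) ^ 2)) ^ 2) :=
      Summable.of_nonneg_of_le hf0 (key j) hbsum
    calc (∑' i : ℕ, (σ (i + 1)) ^ (t + 2) * (a (i + 1)) ^ 2 *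
          (qFun j α (σ (i + 1) * (a (i + 1)) ^ 2)) ^ 2)
        ≤ ∑' i : ℕ, ((j:ℝ)/α) ^ s * (K * ((i : ℝ) + 1) ^ (-r)) :=
          Summable.tsum_le_tsum (key j) hfsum hbsum
      _ = ((j:ℝ)/α) ^ s * (K * M) := by
          rw [tsum_mul_left, tsum_mul_left, hM]
  -- sum over j
  have hKM0 : 0 ≤ K * M := by positivity
  have hsum : (∑ j ∈ Icc 1 n, ∑' i : ℕ,
      (σ (i + 1)) ^ (t + 2) * (a (i + 1)) ^ 2 *
        (qFun j α (σ (i + 1) * (a (i + 1)) ^ 2)) ^ 2)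
      ≤ (n : ℝ) * (((n : ℝ) / α) ^ s * (K * M)) := by
    calc (∑ j ∈ Icc 1 n, ∑' i : ℕ,
        (σ (i + 1)) ^ (t + 2) * (a (i + 1)) ^ 2 *
          (qFun j α (σ (i + 1) * (a (i + 1)) ^ 2)) ^ 2)
        ≤ ∑ j ∈ Icc 1 n, ((n : ℝ) / α) ^ s * (K * M) := by
          apply Finset.sum_le_sum
          intro j hj
          refine (htsum j).trans ?_
          apply mul_le_mul_of_nonneg_right _ hKM0
          apply Real.rpow_le_rpow (by positivity) _ hs0
          gcongr
          exact_mod_cast (Finset.mem_Icc.1 hj).2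
      _ = (n : ℝ) * (((n : ℝ) / α) ^ s * (K * M)) := by
          rw [Finset.sum_const, Nat.card_Icc]
          simp [nsmul_eq_mul]
  -- assemble
  have hV : Vterm σ a t γ α n ≤ (γ ^ 2 / (n : ℝ) ^ 2) *
      ((n : ℝ) * (((n : ℝ) / α) ^ s * (K * M))) := by
    unfold Vterm
    exact mul_le_mul_of_nonneg_left hsum (by positivity)
  refine hV.trans (le_of_eq ?_)
  have hτs : -τv = s - 1 := by rw [hs]; ring
  conv_rhs => rw [hτs, Real.rpow_sub (by positivity : (0:ℝ) < (n:ℝ)/α), Real.rpow_one]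
  have key2 : ∀ P A : ℝ, γ ^ 2 / (n : ℝ) ^ 2 * ((n : ℝ) * (P * A))
      = A * (γ ^ 2 / α) * (P / ((n : ℝ) / α)) := by
    intro P A
    field_simp
  exact key2 _ _
end
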